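/- Let U(i,j) = C(j,i) mod 2, L(i,j) = C(i,j) mod 2 (both valued in {0,1} ⊆ ℤ), P(i,j) = C(i+j,i) mod 2, and let D be the diagonal matrix with D(i,i) = (−1)^{s(i)} where s(i) is the number of 1's in the binary expansion of i. Then for every n ≥ 1, the n×n matrices satisfy P(n) = L(n) · D(n) · U(n), where X(n) denotes the top-left n×n submatrix of X. -/

import Mathlib

def U (i j : ℕ) : ℤ := if Odd (Nat.choose j i) then 1 else 0

def L (i j : ℕ) : ℤ := if Odd (Nat.choose i j) then 1 else 0

def P (i j : ℕ) : ℤ := if Odd (Nat.choose (i + j) i) then 1 else 0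

def D (i j : ℕ) : ℤ := if i = j then (-1) ^ (Nat.digits 2 i).sum else 0

/-- submask characterization via testBit -/
lemma sub_iff (k n : ℕ) : k &&& n = k ↔ ∀ i, k.testBit i = true → n.testBit i = true := by
  constructor
  · intro h i hi
    have := congrArg (fun x => x.testBit i) h
    simp only [Nat.testBit_land, hi, Bool.true_and] at this
    exact this
  · intro h
    apply Nat.eq_of_testBit_eq
    intro i
    rw [Nat.testBit_land]
    cases hk : k.testBit i
    · simp
    · simp [h i hk]

lemma eq_zero_iff_testBit (x : ℕ) : x = 0 ↔ ∀ i, x.testBit i = false := by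
  constructor
  · rintro rfl i; exact Nat.zero_testBit i
  · intro h; exact Nat.eq_of_testBit_eq fun i => by simp [h i, Nat.zero_testBit]

lemma lucas2 (n k : ℕ) :
    Odd (Nat.choose n k) ↔ Odd (Nat.choose (n % 2) (k % 2)) ∧ Odd (Nat.choose (n / 2) (k / 2)) := by
  haveI : Fact (Nat.Prime 2) := ⟨Nat.prime_two⟩
  have h := @Choose.choose_modEq_choose_mod_mul_choose_div_nat n k 2 _
  rw [Nat.ModEq] at h
  rw [Nat.odd_iff, Nat.odd_iff, Nat.odd_iff, h, Nat.mul_mod]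
  rcases Nat.mod_two_eq_zero_or_one (Nat.choose (n % 2) (k % 2)) with h1 | h1 <;>
    rcases Nat.mod_two_eq_zero_or_one (Nat.choose (n / 2) (k / 2)) with h2 | h2 <;>
    simp [h1, h2]

lemma odd_choose_base : ∀ a < 2, ∀ b < 2, (Odd (Nat.choose a b) ↔ b ≤ a) := by decide

lemma submask (n k : ℕ) : Odd (Nat.choose n k) ↔ k &&& n = k := by
  induction n using Nat.strong_induction_on generalizing k with
  | _ n ih =>
    rcases Nat.eq_zero_or_pos n with rfl | hn
    · rw [Nat.and_zero]
      cases k with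
      | zero => simp
      | succ k =>
        rw [Nat.choose_eq_zero_of_lt (Nat.succ_pos k)]
        simp
    · rw [lucas2, odd_choose_base _ (Nat.mod_lt _ (by norm_num)) _ (Nat.mod_lt _ (by norm_num)),
        ih (n / 2) (Nat.div_lt_self hn one_lt_two), sub_iff, sub_iff]
      constructor
      · rintro ⟨h0, hs⟩ i hi
        cases i with
        | zero =>
          rw [Nat.testBit_zero] at hi ⊢
          simp only [decide_eq_true_eq] at hi ⊢
          omega
        | succ i =>
          rw [Nat.testBit_succ] at hi ⊢
          exact hs i hi
      · intro h
        constructor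
        · have h0 := h 0
          rw [Nat.testBit_zero, Nat.testBit_zero] at h0
          simp only [decide_eq_true_eq] at h0
          omega
        · intro i hi
          have := h (i + 1)
          rw [Nat.testBit_succ, Nat.testBit_succ] at this
          exact this hi

lemma addDisj_aux : ∀ N i j : ℕ, i + j ≤ N → (Odd (Nat.choose (i + j) i) ↔ i &&& j = 0) := by
  intro N
  induction N with
  | zero =>
    intro i j h
    have hi : i = 0 := by omega
    have hj : j = 0 := by omega
    subst hi; subst hj
    simp
  | succ N ih =>
    intro i j h
    rcases Nat.eq_zero_or_pos (i + j) with h0 | hpos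
    · have hi : i = 0 := by omega
      have hj : j = 0 := by omega
      subst hi; subst hj; simp
    by_cases hodd : i % 2 = 1 ∧ j % 2 = 1
    · constructor
      · intro hO
        exfalso
        rw [lucas2] at hO
        have h2 : (i + j) % 2 = 0 := by omega
        have h1 : i % 2 = 1 := hodd.1
        rw [h2, h1] at hO
        exact (by decide : ¬ Odd (Nat.choose 0 1)) hO.1
      · intro hA
        exfalso
        have : (i &&& j).testBit 0 = true := by
          rw [Nat.testBit_land, Nat.testBit_zero, Nat.testBit_zero]
          simp [hodd.1, hodd.2]
        rw [hA, Nat.zero_testBit] at this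
        exact Bool.false_ne_true this
    · have hm : (i + j) % 2 = i % 2 + j % 2 := by omega
      have hd : (i + j) / 2 = i / 2 + j / 2 := by omega
      rw [lucas2, hm, hd,
        odd_choose_base _ (by omega) _ (Nat.mod_lt _ (by norm_num)),
        ih (i / 2) (j / 2) (by omega)]
      have hbase : i % 2 ≤ i % 2 + j % 2 := Nat.le_add_right _ _
      rw [iff_true_intro hbase, true_and]
      rw [eq_zero_iff_testBit, eq_zero_iff_testBit]
      constructor
      · intro hh b
        cases b with
        | zero =>
          rw [Nat.testBit_land, Nat.testBit_zero, Nat.testBit_zero]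
          have : i % 2 = 0 ∨ j % 2 = 0 := by omega
          rcases this with h' | h' <;> simp [h']
        | succ b =>
          have := hh b
          rw [Nat.testBit_land] at this ⊢
          rw [Nat.testBit_succ, Nat.testBit_succ]
          exact this
      · intro hh b
        have := hh (b + 1)
        rw [Nat.testBit_land, Nat.testBit_succ, Nat.testBit_succ] at this
        rw [Nat.testBit_land]
        exact this

lemma addDisj (i j : ℕ) : Odd (Nat.choose (i + j) i) ↔ i &&& j = 0 :=
  addDisj_aux (i + j) i j le_rfl

/-- binary digit sum of 2^d + k for k < 2^d -/
lemma digitSum_pow_add (d : ℕ) : ∀ k < 2 ^ d,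
    (Nat.digits 2 (2 ^ d + k)).sum = (Nat.digits 2 k).sum + 1 := by
  induction d with
  | zero =>
    intro k hk
    have : k = 0 := by omega
    subst this
    simp
  | succ d ih =>
    intro k hk
    have h2 : 2 ^ (d + 1) = 2 * 2 ^ d := by ring
    have hpos : 0 < 2 ^ (d + 1) + k := by positivity
    rw [Nat.digits_def' one_lt_two hpos, List.sum_cons]
    have hmod : (2 ^ (d + 1) + k) % 2 = k % 2 := by omega
    have hdiv : (2 ^ (d + 1) + k) / 2 = 2 ^ d + k / 2 := by omega
    rw [hmod, hdiv, ih (k / 2) (by omega)]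
    rcases Nat.eq_zero_or_pos k with rfl | hkpos
    · simp
    · rw [Nat.digits_def' one_lt_two hkpos, List.sum_cons]
      omega

lemma testBit_pow_add {d k : ℕ} (hk : k < 2 ^ d) (j : ℕ) :
    (2 ^ d + k).testBit j = if j = d then true else k.testBit j := by
  rcases lt_trichotomy j d with h | rfl | h
  · rw [if_neg (by omega)]
    exact Nat.testBit_two_pow_add_gt h k
  · rw [if_pos rfl, Nat.testBit_two_pow_add_eq, Nat.testBit_lt_two_pow hk]
    rfl
  · rw [if_neg (by omega)]
    have h1 : 2 ^ d + k < 2 ^ j := by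
      calc 2 ^ d + k < 2 ^ d + 2 ^ d := by omega
      _ = 2 ^ (d + 1) := by ring
      _ ≤ 2 ^ j := Nat.pow_le_pow_right (by norm_num) (by omega)
    rw [Nat.testBit_lt_two_pow h1, Nat.testBit_lt_two_pow (lt_of_lt_of_le hk
      (Nat.pow_le_pow_right (by norm_num) (by omega)))]

lemma and_high {d k m : ℕ} (hk : k < 2 ^ d) (hm : m < 2 ^ d) :
    k &&& (2 ^ d + m) = k &&& m := by
  apply Nat.eq_of_testBit_eq
  intro j
  rw [Nat.testBit_land, Nat.testBit_land, testBit_pow_add hm]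
  by_cases hj : j = d
  · subst hj
    rw [Nat.testBit_lt_two_pow hk]
    simp
  · simp [hj]

lemma and_high2 {d k m : ℕ} (hk : k < 2 ^ d) (hm : m < 2 ^ d) :
    (2 ^ d + k) &&& (2 ^ d + m) = 2 ^ d + (k &&& m) := by
  have hkm : k &&& m < 2 ^ d := lt_of_le_of_lt Nat.and_le_left hk
  apply Nat.eq_of_testBit_eq
  intro j
  rw [Nat.testBit_land, testBit_pow_add hk, testBit_pow_add hm, testBit_pow_add hkm,
    Nat.testBit_land]
  by_cases hj : j = d <;> simp [hj]

lemma sum_mask (d : ℕ) : ∀ m < 2 ^ d,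
    (∑ k ∈ Finset.range (2 ^ d),
      (if k &&& m = k then ((-1 : ℤ)) ^ (Nat.digits 2 k).sum else 0)) =
    if m = 0 then 1 else 0 := by
  induction d with
  | zero =>
    intro m hm
    have : m = 0 := by omega
    subst this
    simp
  | succ d ih =>
    intro m hm
    have h2 : 2 ^ (d + 1) = 2 ^ d + 2 ^ d := by ring
    rw [h2, Finset.sum_range_add]
    by_cases hm2 : m < 2 ^ d
    · rw [ih m hm2]
      have hzero : (∑ k ∈ Finset.range (2 ^ d),
          (if (2 ^ d + k) &&& m = 2 ^ d + k then ((-1 : ℤ)) ^ (Nat.digits 2 (2 ^ d + k)).sum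
            else 0)) = 0 := by
        apply Finset.sum_eq_zero
        intro k hk
        rw [if_neg]
        intro hEq
        have h1 : (2 ^ d + k) &&& m ≤ m := Nat.and_le_right
        omega
      rw [hzero, add_zero]
    · have hp : 0 < 2 ^ d := Nat.pow_pos (n := d) (by norm_num)
      have hmpos : m ≠ 0 := by omega
      rw [if_neg hmpos]
      set m' := m - 2 ^ d with hm'
      have hmeq : m = 2 ^ d + m' := by omega
      have hm'lt : m' < 2 ^ d := by omega
      have hfirst : (∑ k ∈ Finset.range (2 ^ d),
          (if k &&& m = k then ((-1 : ℤ)) ^ (Nat.digits 2 k).sum else 0)) =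
          if m' = 0 then 1 else 0 := by
        rw [← ih m' hm'lt]
        apply Finset.sum_congr rfl
        intro k hk
        rw [Finset.mem_range] at hk
        rw [hmeq, and_high hk hm'lt]
      have hsecond : (∑ k ∈ Finset.range (2 ^ d),
          (if (2 ^ d + k) &&& m = 2 ^ d + k then ((-1 : ℤ)) ^ (Nat.digits 2 (2 ^ d + k)).sum
            else 0)) = -(if m' = 0 then 1 else 0) := by
        rw [← ih m' hm'lt, ← Finset.sum_neg_distrib]
        apply Finset.sum_congr rfl
        intro k hk
        rw [Finset.mem_range] at hk
        rw [hmeq, and_high2 hk hm'lt, digitSum_pow_add d k hk]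
        have hcond : 2 ^ d + (k &&& m') = 2 ^ d + k ↔ k &&& m' = k := by omega
        by_cases hc : k &&& m' = k
        · rw [if_pos (hcond.mpr hc), if_pos hc, pow_succ]
          ring
        · rw [if_neg (fun h => hc (hcond.mp h)), if_neg hc, neg_zero]
      rw [hfirst, hsecond]
      ring

set_option linter.unusedVariables false in
theorem LDU_decomposition (n : ℕ) (hn : 1 ≤ n) :
    (Matrix.of fun i j : Fin n => P i j) =
      (Matrix.of fun i j : Fin n => L i j) *
        (Matrix.of fun i j : Fin n => D i j) *
        (Matrix.of fun i j : Fin n => U i j) := by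
  have hD : (Matrix.of fun i j : Fin n => D i j) =
      Matrix.diagonal (fun i : Fin n => ((-1 : ℤ)) ^ (Nat.digits 2 (i : ℕ)).sum) := by
    ext a b
    rw [Matrix.diagonal_apply, Matrix.of_apply]
    unfold D
    by_cases h : a = b
    · subst h; rw [if_pos rfl, if_pos rfl]
    · rw [if_neg h, if_neg (fun hh => h (Fin.val_inj.mp hh))]
  rw [hD]
  ext i j
  rw [Matrix.mul_apply]
  simp only [Matrix.mul_diagonal, Matrix.of_apply]
  rw [Fin.sum_univ_eq_sum_range
    (fun k => L i k * ((-1 : ℤ)) ^ (Nat.digits 2 k).sum * U k j) n]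
  unfold P L U
  have hij : ((i : ℕ)) &&& (j : ℕ) ≤ (i : ℕ) := Nat.and_le_left
  have hstep : ∀ k : ℕ,
      (if Odd (Nat.choose (i : ℕ) k) then (1 : ℤ) else 0) * ((-1 : ℤ)) ^ (Nat.digits 2 k).sum *
        (if Odd (Nat.choose (j : ℕ) k) then (1 : ℤ) else 0) =
      (if k &&& ((i : ℕ) &&& (j : ℕ)) = k then ((-1 : ℤ)) ^ (Nat.digits 2 k).sum else 0) := by
    intro k
    have h1 : (if Odd (Nat.choose (i : ℕ) k) then (1 : ℤ) else 0) =
        if k &&& (i : ℕ) = k then 1 else 0 := by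
      by_cases hc : k &&& (i : ℕ) = k
      · rw [if_pos hc, if_pos ((submask _ _).mpr hc)]
      · rw [if_neg hc, if_neg (fun h => hc ((submask _ _).mp h))]
    have h2 : (if Odd (Nat.choose (j : ℕ) k) then (1 : ℤ) else 0) =
        if k &&& (j : ℕ) = k then 1 else 0 := by
      by_cases hc : k &&& (j : ℕ) = k
      · rw [if_pos hc, if_pos ((submask _ _).mpr hc)]
      · rw [if_neg hc, if_neg (fun h => hc ((submask _ _).mp h))]
    rw [h1, h2]
    have hiff : k &&& ((i : ℕ) &&& (j : ℕ)) = k ↔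
        (k &&& (i : ℕ) = k ∧ k &&& (j : ℕ) = k) := by
      rw [sub_iff, sub_iff, sub_iff]
      constructor
      · intro h
        constructor <;> intro b hb <;> have hh := h b hb <;>
          rw [Nat.testBit_land] at hh
        · exact ((Bool.and_eq_true _ _).mp hh).1
        · exact ((Bool.and_eq_true _ _).mp hh).2
      · rintro ⟨h1, h2⟩ b hb
        rw [Nat.testBit_land, h1 b hb, h2 b hb]
        rfl
    by_cases hc1 : k &&& (i : ℕ) = k <;> by_cases hc2 : k &&& (j : ℕ) = k <;>
      simp [hc1, hc2, hiff]
  simp only [hstep]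
  have hP : (if Odd (Nat.choose ((i : ℕ) + (j : ℕ)) (i : ℕ)) then (1 : ℤ) else 0) =
      if (i : ℕ) &&& (j : ℕ) = 0 then 1 else 0 := by
    by_cases hc : (i : ℕ) &&& (j : ℕ) = 0
    · rw [if_pos hc, if_pos ((addDisj _ _).mpr hc)]
    · rw [if_neg hc, if_neg (fun h => hc ((addDisj _ _).mp h))]
  rw [hP]
  have hext : (∑ k ∈ Finset.range n,
      (if k &&& ((i : ℕ) &&& (j : ℕ)) = k then ((-1 : ℤ)) ^ (Nat.digits 2 k).sum else 0)) =
      ∑ k ∈ Finset.range (2 ^ n),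
      (if k &&& ((i : ℕ) &&& (j : ℕ)) = k then ((-1 : ℤ)) ^ (Nat.digits 2 k).sum else 0) := by
    apply Finset.sum_subset
    · exact Finset.range_subset_range.mpr (le_of_lt (Nat.lt_two_pow_self (n := n)))
    · intro k hk hk'
      rw [Finset.mem_range] at hk hk'
      rw [if_neg]
      intro hEq
      have h1 : k &&& ((i : ℕ) &&& (j : ℕ)) ≤ (i : ℕ) &&& (j : ℕ) := Nat.and_le_right
      have h2 : (i : ℕ) < n := i.isLt
      omega
  rw [hext, sum_mask n ((i : ℕ) &&& (j : ℕ)) (by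
    have h2 : (i : ℕ) < n := i.isLt
    calc (i : ℕ) &&& (j : ℕ) ≤ (i : ℕ) := Nat.and_le_left
    _ < n := h2
    _ < 2 ^ n := Nat.lt_two_pow_self (n := n))]
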